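/- arXiv:2401.05394 — 6 statements merged into one kernel-verified Lean document; each statement's English description precedes it below -/
import Mathlib

section
/- For any w ∈ ℝ^d and any k ∈ {1,...,d}, the k-support norm satisfies ‖w‖₂ ≤ ‖w‖ₖˢᵖ ≤ ‖w‖₁. -/
noncomputable section

/-- The k-support norm: infimum of `Σ_I ‖v_I‖₂` over decompositions `w = Σ_I v_I`
where each `v_I` is supported on `I` with `|I| ≤ k`. -/
def ksup {d : ℕ} (k : ℕ) (w : Fin d → ℝ) : ℝ :=
  sInf {s : ℝ | ∃ v : Finset (Fin d) → (Fin d → ℝ),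
    (∀ I i, v I i ≠ 0 → i ∈ I ∧ I.card ≤ k) ∧
    (∑ I : Finset (Fin d), v I) = w ∧
    s = ∑ I : Finset (Fin d), Real.sqrt (∑ i, (v I i) ^ 2)}

/-- The k-support norm is sandwiched between the ℓ2 and ℓ1 norms. -/
theorem l2_le_ksup_le_l1 {d : ℕ} (k : ℕ) (hk1 : 1 ≤ k) (hk2 : k ≤ d)
    (w : Fin d → ℝ) :
    Real.sqrt (∑ i, (w i) ^ 2) ≤ ksup k w ∧ ksup k w ≤ ∑ i, |w i| := by
  classical
  set S := {s : ℝ | ∃ v : Finset (Fin d) → (Fin d → ℝ),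
    (∀ I i, v I i ≠ 0 → i ∈ I ∧ I.card ≤ k) ∧
    (∑ I : Finset (Fin d), v I) = w ∧
    s = ∑ I : Finset (Fin d), Real.sqrt (∑ i, (v I i) ^ 2)} with hS
  set v0 : Finset (Fin d) → (Fin d → ℝ) := fun I i => if I = {i} then w i else 0 with hv0
  have hmem : (∑ i, |w i|) ∈ S := by
    refine ⟨v0, ?_, ?_, ?_⟩
    · intro I i h
      by_cases hI : I = {i}
      · subst hI
        exact ⟨Finset.mem_singleton_self i, by simpa using hk1⟩
      · simp [v0, hI] at h
    · funext i
      simp only [Finset.sum_apply, v0]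
      rw [Finset.sum_ite_eq' Finset.univ ({i} : Finset (Fin d))]
      simp
    · have h1 : ∀ I : Finset (Fin d),
        I ∉ Finset.univ.image (fun i : Fin d => ({i} : Finset (Fin d))) →
          Real.sqrt (∑ i, (v0 I i) ^ 2) = 0 := by
        intro I hI
        have hz : ∀ i, v0 I i = 0 := by
          intro i
          have hne : I ≠ {i} := by
            intro h
            exact hI (Finset.mem_image.2 ⟨i, Finset.mem_univ i, h.symm⟩)
          simp [v0, hne]
        simp [hz]
      rw [← Finset.sum_subset (Finset.subset_univ _) (fun I _ hI => h1 I hI)]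
      rw [Finset.sum_image (fun a _ b _ h => Finset.singleton_injective h)]
      refine Finset.sum_congr rfl fun i _ => ?_
      have : ∀ j, (v0 {i} j) ^ 2 = if i = j then (w j) ^ 2 else 0 := by
        intro j
        by_cases h : i = j <;> simp [v0, Finset.singleton_inj, h, eq_comm]
      rw [show (∑ j, (v0 {i} j) ^ 2) = ∑ j, if i = j then (w j) ^ 2 else 0 from
        Finset.sum_congr rfl fun j _ => this j]
      rw [Finset.sum_ite_eq Finset.univ i]
      simp [Real.sqrt_sq_eq_abs]
  have hbdd : BddBelow S := by
    refine ⟨0, ?_⟩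
    rintro s ⟨v, -, -, rfl⟩
    exact Finset.sum_nonneg fun I _ => Real.sqrt_nonneg _
  constructor
  · apply le_csInf ⟨_, hmem⟩
    rintro s ⟨v, -, hsum, rfl⟩
    set e : (Fin d → ℝ) ≃ EuclideanSpace ℝ (Fin d) := (WithLp.equiv 2 (Fin d → ℝ)).symm with he
    have key : ∀ x : Fin d → ℝ, ‖e x‖ = Real.sqrt (∑ i, (x i) ^ 2) := by
      intro x
      rw [EuclideanSpace.norm_eq]
      congr 1
      exact Finset.sum_congr rfl fun i _ => by
        rw [Real.norm_eq_abs, sq_abs]; rfl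
    have hesum : e w = ∑ I : Finset (Fin d), e (v I) := by
      rw [← hsum, he, WithLp.equiv_symm_apply, WithLp.toLp_sum]
    calc Real.sqrt (∑ i, (w i) ^ 2)
        = ‖e w‖ := (key w).symm
      _ = ‖∑ I : Finset (Fin d), e (v I)‖ := by rw [hesum]
      _ ≤ ∑ I : Finset (Fin d), ‖e (v I)‖ := norm_sum_le _ _
      _ = ∑ I : Finset (Fin d), Real.sqrt (∑ i, (v I i) ^ 2) :=
          Finset.sum_congr rfl fun I _ => key (v I)
  · exact csInf_le hbdd hmem

end
end

section
/- The k-support norm is a norm on ℝ^d, i.e. it is positive definite, absolutely homogeneous, and satisfies the triangle inequality. -/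
noncomputable section

namespace KsupAux

variable {d : ℕ}

/-- Euclidean norm as a sqrt of sum of squares. -/
def nrm (x : Fin d → ℝ) : ℝ := Real.sqrt (∑ i, (x i) ^ 2)

lemma nrm_nonneg (x : Fin d → ℝ) : 0 ≤ nrm x := Real.sqrt_nonneg _

lemma nrm_eq (x : Fin d → ℝ) : nrm x = ‖(WithLp.equiv 2 (Fin d → ℝ)).symm x‖ := by
  rw [EuclideanSpace.norm_eq]
  simp [nrm, Real.norm_eq_abs, sq_abs]

lemma nrm_add_le (x y : Fin d → ℝ) : nrm (x + y) ≤ nrm x + nrm y := by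
  rw [nrm_eq, nrm_eq, nrm_eq]
  have h : (WithLp.equiv 2 (Fin d → ℝ)).symm (x + y)
      = (WithLp.equiv 2 (Fin d → ℝ)).symm x + (WithLp.equiv 2 (Fin d → ℝ)).symm y := rfl
  rw [h]
  exact norm_add_le _ _

lemma nrm_smul (a : ℝ) (x : Fin d → ℝ) : nrm (a • x) = |a| * nrm x := by
  rw [nrm_eq, nrm_eq]
  have h : (WithLp.equiv 2 (Fin d → ℝ)).symm (a • x)
      = a • (WithLp.equiv 2 (Fin d → ℝ)).symm x := rfl
  rw [h, norm_smul, Real.norm_eq_abs]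

lemma abs_le_nrm (x : Fin d → ℝ) (i : Fin d) : |x i| ≤ nrm x := by
  rw [← Real.sqrt_sq_eq_abs]
  exact Real.sqrt_le_sqrt (Finset.single_le_sum (fun j _ => sq_nonneg (x j)) (Finset.mem_univ i))

/-- The set of achievable decomposition sums. -/
def K (k : ℕ) (w : Fin d → ℝ) : Set ℝ :=
  {s : ℝ | ∃ v : Finset (Fin d) → (Fin d → ℝ),
    (∀ I i, v I i ≠ 0 → i ∈ I ∧ I.card ≤ k) ∧
    (∑ I : Finset (Fin d), v I) = w ∧
    s = ∑ I : Finset (Fin d), nrm (v I)}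

lemma ksup_eq (k : ℕ) (w : Fin d → ℝ) : ksup k w = sInf (K k w) := rfl

lemma K_nonempty (k : ℕ) (hk1 : 1 ≤ k) (w : Fin d → ℝ) : (K k w).Nonempty := by
  refine ⟨_, fun I => fun i => if I = {i} then w i else 0, ?_, ?_, rfl⟩
  · intro I i h
    have hI : I = {i} := by by_contra h'; simp [h'] at h
    subst hI
    simp [hk1]
  · funext i
    simp only [Finset.sum_apply]
    simp [Finset.sum_ite_eq']

lemma K_nonneg {k : ℕ} {w : Fin d → ℝ} {s : ℝ} (hs : s ∈ K k w) : 0 ≤ s := by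
  obtain ⟨v, -, -, rfl⟩ := hs
  exact Finset.sum_nonneg fun I _ => nrm_nonneg _

lemma K_bddBelow (k : ℕ) (w : Fin d → ℝ) : BddBelow (K k w) :=
  ⟨0, fun _ hs => K_nonneg hs⟩

lemma abs_le_of_mem {k : ℕ} {w : Fin d → ℝ} {s : ℝ} (hs : s ∈ K k w) (i : Fin d) :
    |w i| ≤ s := by
  obtain ⟨v, -, hsum, rfl⟩ := hs
  have h1 : w i = ∑ I : Finset (Fin d), v I i := by
    rw [← hsum]; simp [Finset.sum_apply]
  calc |w i| = |∑ I : Finset (Fin d), v I i| := by rw [h1]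
    _ ≤ ∑ I : Finset (Fin d), |v I i| := Finset.abs_sum_le_sum_abs _ _
    _ ≤ ∑ I : Finset (Fin d), nrm (v I) :=
        Finset.sum_le_sum fun I _ => abs_le_nrm (v I) i

lemma mem_smul {k : ℕ} {w : Fin d → ℝ} {s : ℝ} (a : ℝ) (hs : s ∈ K k w) :
    |a| * s ∈ K k (a • w) := by
  obtain ⟨v, hsupp, hsum, rfl⟩ := hs
  refine ⟨fun I => a • v I, ?_, ?_, ?_⟩
  · intro I i h
    refine hsupp I i fun h0 => h ?_
    simp [h0]
  · rw [← Finset.smul_sum, hsum]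
  · rw [Finset.mul_sum]
    exact Finset.sum_congr rfl fun I _ => (nrm_smul a (v I)).symm

lemma mem_add {k : ℕ} {w z : Fin d → ℝ} {s1 s2 : ℝ}
    (h1 : s1 ∈ K k w) (h2 : s2 ∈ K k z) :
    ∃ s3 ∈ K k (w + z), s3 ≤ s1 + s2 := by
  obtain ⟨v, hvs, hvsum, rfl⟩ := h1
  obtain ⟨u, hus, husum, rfl⟩ := h2
  refine ⟨∑ I : Finset (Fin d), nrm (v I + u I), ⟨fun I => v I + u I, ?_, ?_, rfl⟩, ?_⟩
  · intro I i h
    by_cases hv : v I i ≠ 0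
    · exact hvs I i hv
    · push_neg at hv
      refine hus I i fun h0 => h ?_
      simp [Pi.add_apply, hv, h0]
  · rw [Finset.sum_add_distrib, hvsum, husum]
  · rw [← Finset.sum_add_distrib]
    exact Finset.sum_le_sum fun I _ => nrm_add_le (v I) (u I)

lemma ksup_smul_le (k : ℕ) (hk1 : 1 ≤ k) (a : ℝ) (ha : a ≠ 0) (w : Fin d → ℝ) :
    ksup k (a • w) ≤ |a| * ksup k w := by
  rw [ksup_eq, ksup_eq]
  have hpos : (0 : ℝ) < |a| := abs_pos.mpr ha
  rw [mul_comm, ← div_le_iff₀ hpos]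
  refine le_csInf (K_nonempty k hk1 w) fun s hs => ?_
  rw [div_le_iff₀ hpos, mul_comm]
  exact csInf_le (K_bddBelow k (a • w)) (mem_smul a hs)

end KsupAux

open KsupAux in
/-- The k-support norm is a norm: nonnegative, positive definite, absolutely
homogeneous, and satisfies the triangle inequality. -/
theorem ksup_is_norm {d : ℕ} (k : ℕ) (hk1 : 1 ≤ k) (hk2 : k ≤ d) :
    (∀ w : Fin d → ℝ, 0 ≤ ksup k w) ∧
    (∀ w : Fin d → ℝ, ksup k w = 0 ↔ w = 0) ∧
    (∀ (a : ℝ) (w : Fin d → ℝ), ksup k (a • w) = |a| * ksup k w) ∧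
    (∀ w z : Fin d → ℝ, ksup k (w + z) ≤ ksup k w + ksup k z) := by
  have hnonneg : ∀ w : Fin d → ℝ, 0 ≤ ksup k w := by
    intro w
    rw [ksup_eq]
    exact le_csInf (K_nonempty k hk1 w) fun s hs => K_nonneg hs
  have hzero : ksup k (0 : Fin d → ℝ) = 0 := by
    have h0 : (0 : ℝ) ∈ K k (0 : Fin d → ℝ) := by
      refine ⟨fun _ => 0, ?_, ?_, ?_⟩
      · intro I i h; simp at h
      · simp
      · simp [nrm]
    have hle : ksup k (0 : Fin d → ℝ) ≤ 0 := by
      rw [ksup_eq]; exact csInf_le (K_bddBelow k 0) h0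
    exact le_antisymm hle (hnonneg 0)
  have hdef : ∀ w : Fin d → ℝ, ksup k w = 0 ↔ w = 0 := by
    intro w
    constructor
    · intro h
      funext i
      have hle : |w i| ≤ ksup k w := by
        rw [ksup_eq]
        exact le_csInf (K_nonempty k hk1 w) fun s hs => abs_le_of_mem hs i
      rw [h] at hle
      have := abs_nonneg (w i)
      have : |w i| = 0 := le_antisymm hle this
      simpa using this
    · rintro rfl; exact hzero
  have hsmul : ∀ (a : ℝ) (w : Fin d → ℝ), ksup k (a • w) = |a| * ksup k w := by
    intro a w
    by_cases ha : a = 0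
    · subst ha
      simp [hzero]
    · have h1 := ksup_smul_le k hk1 a ha w
      have h2 := ksup_smul_le k hk1 a⁻¹ (inv_ne_zero ha) (a • w)
      have hw : a⁻¹ • (a • w) = w := by
        rw [smul_smul, inv_mul_cancel₀ ha, one_smul]
      rw [hw, abs_inv] at h2
      have hpos : (0 : ℝ) < |a| := abs_pos.mpr ha
      refine le_antisymm h1 ?_
      calc |a| * ksup k w ≤ |a| * (|a|⁻¹ * ksup k (a • w)) :=
            mul_le_mul_of_nonneg_left h2 (le_of_lt hpos)
        _ = ksup k (a • w) := by
            rw [← mul_assoc, mul_inv_cancel₀ (ne_of_gt hpos), one_mul]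
  refine ⟨hnonneg, hdef, hsmul, ?_⟩
  intro w z
  rw [ksup_eq, ksup_eq, ksup_eq]
  have key : ∀ s1 ∈ K k w, sInf (K k (w + z)) - sInf (K k z) ≤ s1 := by
    intro s1 hs1
    have h2 : sInf (K k (w + z)) - s1 ≤ sInf (K k z) := by
      refine le_csInf (K_nonempty k hk1 z) fun s2 hs2 => ?_
      obtain ⟨s3, hm, hle⟩ := mem_add hs1 hs2
      have := csInf_le (K_bddBelow k (w + z)) hm
      linarith
    linarith
  have := le_csInf (K_nonempty k hk1 w) key
  linarith
end
end

section
/- The dual norm of the k-support norm on ℝ^d is the top-k norm, defined as ‖w‖₍ₖ₎ = the ℓ2 norm of the vector consisting of the k largest-in-absolute-value entries of w. -/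
noncomputable section

/-- The top-k norm: ℓ2 norm of the `k` largest-in-absolute-value entries,
expressed as the supremum of `‖w_I‖₂` over subsets `I` of cardinality `k`. -/
def topk {d : ℕ} (k : ℕ) (w : Fin d → ℝ) : ℝ :=
  sSup {s : ℝ | ∃ I : Finset (Fin d), I.card = k ∧
    s = Real.sqrt (∑ i ∈ I, (w i) ^ 2)}

variable {d : ℕ}

def ksupSet (k : ℕ) (w : Fin d → ℝ) : Set ℝ :=
  {s : ℝ | ∃ v : Finset (Fin d) → (Fin d → ℝ),
    (∀ I i, v I i ≠ 0 → i ∈ I ∧ I.card ≤ k) ∧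
    (∑ I : Finset (Fin d), v I) = w ∧
    s = ∑ I : Finset (Fin d), Real.sqrt (∑ i, (v I i) ^ 2)}

lemma ksup_eq (k : ℕ) (w : Fin d → ℝ) : ksup k w = sInf (ksupSet k w) := rfl

lemma ksupSet_nonneg (k : ℕ) (w : Fin d → ℝ) : ∀ s ∈ ksupSet k w, (0:ℝ) ≤ s := by
  rintro s ⟨v, _, _, rfl⟩
  exact Finset.sum_nonneg fun I _ => Real.sqrt_nonneg _

lemma ksupSet_bddBelow (k : ℕ) (w : Fin d → ℝ) : BddBelow (ksupSet k w) :=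
  ⟨0, ksupSet_nonneg k w⟩

lemma ksupSet_nonempty (k : ℕ) (hk1 : 1 ≤ k) (w : Fin d → ℝ) :
    (ksupSet k w).Nonempty := by
  refine ⟨_, fun I i => if I = {i} then w i else 0, ?_, ?_, rfl⟩
  · intro I i h
    by_cases hI : I = {i}
    · subst hI; simpa using hk1
    · simp [hI] at h
  · funext i
    simp [Finset.sum_apply, Finset.sum_ite_eq]

def topkSet (k : ℕ) (y : Fin d → ℝ) : Set ℝ :=
  {s : ℝ | ∃ I : Finset (Fin d), I.card = k ∧
    s = Real.sqrt (∑ i ∈ I, (y i) ^ 2)}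

lemma topk_eq (k : ℕ) (y : Fin d → ℝ) : topk k y = sSup (topkSet k y) := rfl

lemma topkSet_finite (k : ℕ) (y : Fin d → ℝ) : (topkSet k y).Finite := by
  have : topkSet k y ⊆ (fun I : Finset (Fin d) => Real.sqrt (∑ i ∈ I, (y i) ^ 2)) ''
      Set.univ := by
    rintro s ⟨I, _, rfl⟩; exact ⟨I, trivial, rfl⟩
  exact Set.Finite.subset (Set.finite_univ.image _) this

lemma topkSet_nonempty (k : ℕ) (hk2 : k ≤ d) (y : Fin d → ℝ) :
    (topkSet k y).Nonempty := by
  obtain ⟨I, _, hcard⟩ := Finset.exists_subset_card_eq (s := (Finset.univ : Finset (Fin d))) (n := k)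
    (by simpa using hk2)
  exact ⟨_, I, hcard, rfl⟩

lemma sqrt_subset_le_topk {k : ℕ} (hk2 : k ≤ d) (y : Fin d → ℝ) {I : Finset (Fin d)}
    (hI : I.card ≤ k) :
    Real.sqrt (∑ i ∈ I, (y i) ^ 2) ≤ topk k y := by
  obtain ⟨J, hIJ, hJ⟩ := Finset.exists_superset_card_eq hI (by simpa using hk2)
  refine le_trans ?_ (le_csSup ((topkSet_finite k y).bddAbove) ⟨J, hJ, rfl⟩)
  exact Real.sqrt_le_sqrt (Finset.sum_le_sum_of_subset_of_nonneg hIJ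
    fun i _ _ => sq_nonneg _)

lemma topk_nonneg {k : ℕ} (hk2 : k ≤ d) (y : Fin d → ℝ) : 0 ≤ topk k y := by
  obtain ⟨s, I, hI, rfl⟩ := topkSet_nonempty k hk2 y
  exact le_trans (Real.sqrt_nonneg _)
    (le_csSup ((topkSet_finite k y).bddAbove) ⟨I, hI, rfl⟩)

/-- The dual norm of the k-support norm is the top-k norm:
`sup {⟨y,w⟩ : ‖w‖ₖˢᵖ ≤ 1} = ‖y‖₍ₖ₎`. -/
theorem dual_of_ksup_eq_topk {d : ℕ} (k : ℕ) (hk1 : 1 ≤ k) (hk2 : k ≤ d) :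
    ∀ y : Fin d → ℝ,
      IsLUB {r : ℝ | ∃ w, ksup k w ≤ 1 ∧ r = ∑ i, y i * w i} (topk k y) := by
  intro y
  constructor
  · -- upper bound
    rintro r ⟨w, hw, rfl⟩
    have key : ∀ s ∈ ksupSet k w, (∑ i, y i * w i) ≤ topk k y * s := by
      rintro s ⟨v, hsupp, hsum, rfl⟩
      have hyw : (∑ i, y i * w i) = ∑ I : Finset (Fin d), ∑ i, y i * v I i := by
        rw [← hsum]
        rw [Finset.sum_comm]
        exact Finset.sum_congr rfl fun i _ => by
          simp [Finset.sum_apply, Finset.mul_sum]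
      rw [hyw, Finset.mul_sum]
      refine Finset.sum_le_sum fun I _ => ?_
      by_cases hvI : v I = 0
      · simp [hvI, mul_nonneg (topk_nonneg hk2 y) (Real.sqrt_nonneg _)]
      · obtain ⟨i₀, hi₀⟩ := Function.ne_iff.1 hvI
        have hIk : I.card ≤ k := (hsupp I i₀ hi₀).2
        have hzero : ∀ i ∈ Finset.univ, i ∉ I → y i * v I i = 0 := by
          intro i _ hi
          have : v I i = 0 := by
            by_contra h
            exact hi (hsupp I i h).1
          simp [this]
        have h1 : (∑ i, y i * v I i) = ∑ i ∈ I, y i * v I i :=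
          (Finset.sum_subset (Finset.subset_univ I) hzero).symm
        have h2 : (∑ i, (v I i) ^ 2) = ∑ i ∈ I, (v I i) ^ 2 := by
          refine (Finset.sum_subset (Finset.subset_univ I) ?_).symm
          intro i _ hi
          have : v I i = 0 := by
            by_contra h
            exact hi (hsupp I i h).1
          simp [this]
        rw [h1, h2]
        calc (∑ i ∈ I, y i * v I i)
            ≤ Real.sqrt (∑ i ∈ I, (y i)^2) * Real.sqrt (∑ i ∈ I, (v I i)^2) :=
              Real.sum_mul_le_sqrt_mul_sqrt _ _ _
          _ ≤ topk k y * Real.sqrt (∑ i ∈ I, (v I i)^2) :=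
              mul_le_mul_of_nonneg_right (sqrt_subset_le_topk hk2 y hIk)
                (Real.sqrt_nonneg _)
    have ht0 : 0 ≤ topk k y := topk_nonneg hk2 y
    rcases eq_or_lt_of_le ht0 with ht | ht
    · obtain ⟨s₀, hs₀⟩ := ksupSet_nonempty k hk1 w
      have := key s₀ hs₀
      rw [← ht] at this ⊢
      linarith
    · have hdiv : (∑ i, y i * w i) / topk k y ≤ sInf (ksupSet k w) := by
        refine le_csInf (ksupSet_nonempty k hk1 w) fun s hs => ?_
        rw [div_le_iff₀ ht]
        linarith [key s hs]
      have : (∑ i, y i * w i) / topk k y ≤ 1 := le_trans hdiv hw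
      calc (∑ i, y i * w i) = (∑ i, y i * w i) / topk k y * topk k y := by
            field_simp
        _ ≤ 1 * topk k y := mul_le_mul_of_nonneg_right this ht0
        _ = topk k y := one_mul _
  · -- least upper bound
    intro b hb
    have hb0 : (0:ℝ) ≤ b := by
      refine hb ⟨0, ?_, by simp⟩
      refine le_trans (csInf_le (ksupSet_bddBelow k 0) ?_) zero_le_one
      exact ⟨0, by simp, by simp, by simp⟩
    rw [topk_eq]
    refine Real.sSup_le ?_ hb0
    rintro x ⟨I, hI, rfl⟩
    set c := Real.sqrt (∑ i ∈ I, (y i) ^ 2) with hc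
    rcases eq_or_lt_of_le (Real.sqrt_nonneg (∑ i ∈ I, (y i) ^ 2)) with h0 | h0
    · rw [hc, ← h0]; exact hb0
    set w : Fin d → ℝ := fun i => if i ∈ I then y i / c else 0 with hwdef
    have hsum_sq : (∑ i, (w i) ^ 2) = 1 := by
      have : (∑ i, (w i)^2) = ∑ i ∈ I, (y i / c)^2 := by
        rw [← Finset.sum_subset (Finset.subset_univ I) (by
          intro i _ hi; simp [hwdef, hi])]
        exact Finset.sum_congr rfl fun i hi => by simp [hwdef, hi]
      rw [this]
      have hc2 : c ^ 2 = ∑ i ∈ I, (y i)^2 :=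
        Real.sq_sqrt (Finset.sum_nonneg fun i _ => sq_nonneg _)
      have hcne : c ≠ 0 := ne_of_gt (hc ▸ h0)
      simp only [div_pow]
      rw [← Finset.sum_div, ← hc2, div_self (by positivity)]
    have hmem : (1:ℝ) ∈ ksupSet k w := by
      refine ⟨fun J => if J = I then w else 0, ?_, ?_, ?_⟩
      · intro J i h
        by_cases hJ : J = I
        · subst hJ
          simp only [if_pos rfl] at h
          constructor
          · by_contra hi
            exact h (by simp [hwdef, hi])
          · exact hI.le
        · simp [hJ] at h
      · funext i
        simp [Finset.sum_apply, apply_ite (fun f : Fin d → ℝ => f i),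
          Finset.sum_ite_eq]
      · have : ∀ J : Finset (Fin d),
            Real.sqrt (∑ i, ((if J = I then w else (0: Fin d → ℝ)) i) ^ 2)
              = if J = I then 1 else 0 := by
          intro J
          by_cases hJ : J = I <;> simp [hJ, hsum_sq]
        simp only [this]
        simp
    have hksup : ksup k w ≤ 1 := csInf_le (ksupSet_bddBelow k w) hmem
    have hval : (∑ i, y i * w i) = c := by
      have : (∑ i, y i * w i) = ∑ i ∈ I, y i * (y i / c) := by
        rw [← Finset.sum_subset (Finset.subset_univ I) (by
          intro i _ hi; simp [hwdef, hi])]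
        exact Finset.sum_congr rfl fun i hi => by simp [hwdef, hi]
      rw [this]
      have hc2 : c ^ 2 = ∑ i ∈ I, (y i)^2 :=
        Real.sq_sqrt (Finset.sum_nonneg fun i _ => sq_nonneg _)
      have : (∑ i ∈ I, y i * (y i / c)) = (∑ i ∈ I, (y i)^2) / c := by
        rw [Finset.sum_div]
        exact Finset.sum_congr rfl fun i _ => by ring
      have hcne : c ≠ 0 := ne_of_gt (hc ▸ h0)
      rw [this, ← hc2, sq, mul_div_assoc, div_self hcne, mul_one]
    exact hb ⟨w, hksup, hval.symm⟩
end
end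

section
/- Let n(w) = (1/2)‖w‖₍ₖ₎² be the half-squared top-k norm on ℝ^d. Then for every w, the subdifferential ∂n(w) equals the convex hull of π_HT(w), the set of all hard-thresholdings of w keeping k largest-in-absolute-value entries. -/
noncomputable section

set_option maxHeartbeats 1000000

/-- Subdifferential of a function `g : ℝ^d → ℝ` at `w`. -/
def subdiff {d : ℕ} (g : (Fin d → ℝ) → ℝ) (w : Fin d → ℝ) : Set (Fin d → ℝ) :=
  {v | ∀ z, g w + ∑ i, v i * (z i - w i) ≤ g z}

/-- The hard-thresholding set: minimizers of `‖z - w‖₂²` over `k`-sparse `z`. -/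
def htSet {d : ℕ} (k : ℕ) (w : Fin d → ℝ) : Set (Fin d → ℝ) :=
  {z | (Finset.univ.filter fun i => z i ≠ 0).card ≤ k ∧
    ∀ z' : Fin d → ℝ, (Finset.univ.filter fun i => z' i ≠ 0).card ≤ k →
      (∑ i, (z i - w i) ^ 2) ≤ ∑ i, (z' i - w i) ^ 2}

namespace TopkProof

def ksets (d k : ℕ) : Finset (Finset (Fin d)) := Finset.univ.powersetCard k

lemma mem_ksets {d k : ℕ} {I : Finset (Fin d)} : I ∈ ksets d k ↔ I.card = k := by
  simp [ksets, Finset.mem_powersetCard_univ]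

lemma ksets_nonempty {d k : ℕ} (hk2 : k ≤ d) : (ksets d k).Nonempty := by
  rw [ksets, Finset.powersetCard_nonempty]
  simpa using hk2

lemma topk_sq {d k : ℕ} (hk2 : k ≤ d) (u : Fin d → ℝ) :
    (topk k u) ^ 2
    = (ksets d k).sup' (ksets_nonempty hk2) (fun I => ∑ i ∈ I, u i ^ 2) := by
  have hne := ksets_nonempty (d := d) hk2
  rw [topk]
  have hset : {s : ℝ | ∃ I : Finset (Fin d), I.card = k ∧
      s = Real.sqrt (∑ i ∈ I, (u i) ^ 2)}
      = (fun I => Real.sqrt (∑ i ∈ I, u i ^ 2)) '' (ksets d k : Set (Finset (Fin d))) := by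
    ext s
    simp only [Set.mem_setOf_eq, Set.mem_image, Finset.mem_coe, mem_ksets]
    constructor
    · rintro ⟨I, hI, rfl⟩; exact ⟨I, hI, rfl⟩
    · rintro ⟨I, hI, rfl⟩; exact ⟨I, hI, rfl⟩
  rw [hset, ← Finset.sup'_eq_csSup_image _ hne]
  have hcomp : (ksets d k).sup' hne (fun I => Real.sqrt (∑ i ∈ I, u i ^ 2))
      = Real.sqrt ((ksets d k).sup' hne (fun I => ∑ i ∈ I, u i ^ 2)) := by
    refine (Finset.comp_sup'_eq_sup'_comp hne Real.sqrt ?_).symm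
    intro x y
    exact Monotone.map_max (fun a b h => Real.sqrt_le_sqrt h)
  rw [hcomp]
  refine Real.sq_sqrt ?_
  obtain ⟨I, hI⟩ := hne
  refine le_trans ?_ (Finset.le_sup' _ hI)
  exact Finset.sum_nonneg fun i _ => sq_nonneg _

lemma le_topk_sq {d k : ℕ} (hk2 : k ≤ d) (u : Fin d → ℝ) {I : Finset (Fin d)}
    (hI : I.card = k) : ∑ i ∈ I, u i ^ 2 ≤ (topk k u) ^ 2 := by
  rw [topk_sq hk2]
  exact Finset.le_sup' (fun I => ∑ i ∈ I, u i ^ 2) (mem_ksets.mpr hI)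

lemma topk_sq_le {d k : ℕ} (hk2 : k ≤ d) (u : Fin d → ℝ) {c : ℝ}
    (hc : ∀ I : Finset (Fin d), I.card = k → ∑ i ∈ I, u i ^ 2 ≤ c) :
    (topk k u) ^ 2 ≤ c := by
  rw [topk_sq hk2]
  exact Finset.sup'_le _ _ fun I hI => hc I (mem_ksets.mp hI)

/-- restriction of `w` to coordinates in `I`. -/
def restr {d : ℕ} (w : Fin d → ℝ) (I : Finset (Fin d)) : Fin d → ℝ :=
  fun i => if i ∈ I then w i else 0

lemma restr_sparse {d k : ℕ} {w : Fin d → ℝ} {I : Finset (Fin d)} (hI : I.card = k) :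
    (Finset.univ.filter fun i => restr w I i ≠ 0).card ≤ k := by
  refine le_trans (Finset.card_le_card ?_) hI.le
  intro i hi
  simp only [Finset.mem_filter, restr] at hi
  by_contra h
  simp [h] at hi

lemma restr_dist {d : ℕ} (w : Fin d → ℝ) (I : Finset (Fin d)) :
    ∑ i, (restr w I i - w i) ^ 2 + ∑ i ∈ I, w i ^ 2 = ∑ i, w i ^ 2 := by
  rw [← Finset.univ_inter I, ← Finset.sum_ite_mem, ← Finset.sum_add_distrib]
  apply Finset.sum_congr rfl
  intro i _
  by_cases h : i ∈ I <;> simp [restr, h]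

lemma sparse_dist_ge {d k : ℕ} (hk2 : k ≤ d) {w : Fin d → ℝ} {M : ℝ}
    (hMub : ∀ I : Finset (Fin d), I.card = k → ∑ i ∈ I, w i ^ 2 ≤ M)
    {z : Fin d → ℝ} (hz : (Finset.univ.filter fun i => z i ≠ 0).card ≤ k) :
    ∑ i, w i ^ 2 - M ≤ ∑ i, (z i - w i) ^ 2 := by
  have h1 : ∑ i ∈ (Finset.univ.filter fun i => z i ≠ 0), w i ^ 2 ≤ M := by
    obtain ⟨J, hsub, hcard⟩ := Finset.exists_superset_card_eq hz (by simpa using hk2)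
    exact le_trans
      (Finset.sum_le_sum_of_subset_of_nonneg hsub fun _ _ _ => sq_nonneg _)
      (hMub J hcard)
  have hsplit := Finset.sum_filter_add_sum_filter_not Finset.univ
    (fun i => z i ≠ 0) (fun i => w i ^ 2)
  have h2 : ∑ i ∈ Finset.univ.filter (fun i => ¬ z i ≠ 0), w i ^ 2
      ≤ ∑ i, (z i - w i) ^ 2 := by
    refine le_trans (Finset.sum_le_sum ?_)
      (Finset.sum_le_sum_of_subset_of_nonneg (Finset.filter_subset _ _)
        fun _ _ _ => sq_nonneg _)
    intro i hi
    simp only [Finset.mem_filter, not_not] at hi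
    rw [hi.2]
    simp
  linarith


lemma htSet_eq {d k : ℕ} (hk2 : k ≤ d) (w : Fin d → ℝ) {M : ℝ}
    (hMub : ∀ I : Finset (Fin d), I.card = k → ∑ i ∈ I, w i ^ 2 ≤ M)
    {I₀ : Finset (Fin d)} (hI₀c : I₀.card = k) (hI₀ : ∑ i ∈ I₀, w i ^ 2 = M) :
    htSet k w = restr w '' {I : Finset (Fin d) | I.card = k ∧ ∑ i ∈ I, w i ^ 2 = M} := by
  ext z
  constructor
  · rintro ⟨hzs, hzmin⟩
    obtain ⟨I, hSI, hIc⟩ := Finset.exists_superset_card_eq hzs (by simpa using hk2)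
    have hmin : ∑ i, (z i - w i) ^ 2 ≤ ∑ i, w i ^ 2 - M := by
      have h1 := hzmin (restr w I₀) (restr_sparse hI₀c)
      have h2 := restr_dist w I₀
      linarith
    set S := Finset.univ.filter fun i => z i ≠ 0 with hSdef
    have hAB := Finset.sum_filter_add_sum_filter_not Finset.univ
      (fun i => z i ≠ 0) (fun i => (z i - w i) ^ 2)
    have hB : ∑ i ∈ Finset.univ.filter (fun i => ¬ z i ≠ 0), (z i - w i) ^ 2
        = ∑ i ∈ Finset.univ.filter (fun i => ¬ z i ≠ 0), w i ^ 2 := by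
      apply Finset.sum_congr rfl
      intro i hi
      simp only [Finset.mem_filter, not_not] at hi
      rw [hi.2]; ring
    have hW := Finset.sum_filter_add_sum_filter_not Finset.univ
      (fun i => z i ≠ 0) (fun i => w i ^ 2)
    have hIS := Finset.sum_sdiff (f := fun i => w i ^ 2) hSI
    have hIM : ∑ i ∈ I, w i ^ 2 ≤ M := hMub I hIc
    have hAnn : (0:ℝ) ≤ ∑ i ∈ S, (z i - w i) ^ 2 :=
      Finset.sum_nonneg fun i _ => sq_nonneg _
    have hISnn : (0:ℝ) ≤ ∑ i ∈ I \ S, w i ^ 2 :=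
      Finset.sum_nonneg fun i _ => sq_nonneg _
    -- conclude: A = 0, ∑_{I\S} w² = 0, ∑_I w² = M
    have hA0 : ∑ i ∈ S, (z i - w i) ^ 2 = 0 := by linarith
    have hIS0 : ∑ i ∈ I \ S, w i ^ 2 = 0 := by linarith
    have hIMeq : ∑ i ∈ I, w i ^ 2 = M := by linarith
    have hzw : ∀ i ∈ S, z i = w i := by
      intro i hi
      have := (Finset.sum_eq_zero_iff_of_nonneg fun i _ => sq_nonneg (z i - w i)).mp hA0 i hi
      have := pow_eq_zero_iff (n := 2) (by norm_num) |>.mp this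
      linarith
    have hw0 : ∀ i ∈ I \ S, w i = 0 := by
      intro i hi
      have := (Finset.sum_eq_zero_iff_of_nonneg fun i _ => sq_nonneg (w i)).mp hIS0 i hi
      exact pow_eq_zero_iff (n := 2) (by norm_num) |>.mp this
    refine ⟨I, ⟨hIc, hIMeq⟩, ?_⟩
    funext i
    by_cases hiS : i ∈ S
    · rw [restr, if_pos (hSI hiS)]
      exact (hzw i hiS).symm
    · have hz0 : z i = 0 := by
        by_contra h
        exact hiS (Finset.mem_filter.mpr ⟨Finset.mem_univ i, h⟩)
      by_cases hiI : i ∈ I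
      · rw [restr, if_pos hiI, hw0 i (Finset.mem_sdiff.mpr ⟨hiI, hiS⟩), hz0]
      · rw [restr, if_neg hiI, hz0]
  · rintro ⟨I, ⟨hIc, hIM⟩, rfl⟩
    refine ⟨restr_sparse hIc, fun z' hz' => ?_⟩
    have h1 := restr_dist w I
    have h2 := sparse_dist_ge hk2 hMub hz'
    linarith

lemma restr_mem_subdiff {d k : ℕ} (hk2 : k ≤ d) {w : Fin d → ℝ} {I : Finset (Fin d)}
    (hIc : I.card = k)
    (hIM : ∀ J : Finset (Fin d), J.card = k → ∑ i ∈ J, w i ^ 2 ≤ ∑ i ∈ I, w i ^ 2) :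
    restr w I ∈ subdiff (fun u => (1 / 2 : ℝ) * (topk k u) ^ 2) w := by
  intro z
  simp only
  have h1 : (topk k w) ^ 2 = ∑ i ∈ I, w i ^ 2 :=
    le_antisymm (topk_sq_le hk2 w hIM) (le_topk_sq hk2 w hIc)
  have h2 : ∑ i ∈ I, z i ^ 2 ≤ (topk k z) ^ 2 := le_topk_sq hk2 z hIc
  have h3 : ∑ i, restr w I i * (z i - w i) = ∑ i ∈ I, w i * (z i - w i) := by
    rw [← Finset.univ_inter I, ← Finset.sum_ite_mem]
    apply Finset.sum_congr rfl
    intro i _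
    by_cases h : i ∈ I <;> simp [restr, h]
  have h4 : ∑ i ∈ I, (w i * (z i - w i) + (1 / 2 : ℝ) * w i ^ 2)
      ≤ ∑ i ∈ I, (1 / 2 : ℝ) * z i ^ 2 := by
    refine Finset.sum_le_sum fun i _ => ?_
    nlinarith [sq_nonneg (z i - w i)]
  rw [Finset.sum_add_distrib, ← Finset.mul_sum, ← Finset.mul_sum] at h4
  rw [h1, h3]
  linarith

lemma subdiff_convex {d : ℕ} (g : (Fin d → ℝ) → ℝ) (w : Fin d → ℝ) :
    Convex ℝ (subdiff g w) := by
  intro v₁ h₁ v₂ h₂ a b ha hb hab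
  intro z
  have e1 := h₁ z
  have e2 := h₂ z
  have hsum : ∑ i, (a • v₁ + b • v₂) i * (z i - w i)
      = a * ∑ i, v₁ i * (z i - w i) + b * ∑ i, v₂ i * (z i - w i) := by
    rw [Finset.mul_sum, Finset.mul_sum, ← Finset.sum_add_distrib]
    apply Finset.sum_congr rfl
    intro i _
    simp only [Pi.add_apply, Pi.smul_apply, smul_eq_mul]
    ring
  rw [hsum]
  have ha' := mul_le_mul_of_nonneg_left e1 ha
  have hb' := mul_le_mul_of_nonneg_left e2 hb
  rw [mul_add] at ha' hb'
  have h3 : a * g w + b * g w = g w := by rw [← add_mul, hab, one_mul]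
  have h4 : a * g z + b * g z = g z := by rw [← add_mul, hab, one_mul]
  linarith


lemma subdiff_subset_hull {d k : ℕ} (hk2 : k ≤ d) (w : Fin d → ℝ) :
    subdiff (fun u => (1 / 2 : ℝ) * (topk k u) ^ 2) w ⊆ convexHull ℝ (htSet k w) := by
  classical
  intro v hv
  by_contra hvout
  have hne := ksets_nonempty (d := d) (k := k) hk2
  obtain ⟨I₀, hI₀mem, hI₀⟩ := Finset.exists_mem_eq_sup' hne (fun I => ∑ i ∈ I, w i ^ 2)
  set M : ℝ := (ksets d k).sup' hne (fun I => ∑ i ∈ I, w i ^ 2) with hMdef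
  have hMub : ∀ I : Finset (Fin d), I.card = k → ∑ i ∈ I, w i ^ 2 ≤ M :=
    fun I hI => Finset.le_sup' (fun I => ∑ i ∈ I, w i ^ 2) (mem_ksets.mpr hI)
  have hI₀c : I₀.card = k := mem_ksets.mp hI₀mem
  have hI₀M : ∑ i ∈ I₀, w i ^ 2 = M := hI₀.symm
  have hHT := htSet_eq hk2 w hMub hI₀c hI₀M
  have hfin : (htSet k w).Finite := by
    rw [hHT]; exact (Set.toFinite _).image _
  have hclosed : IsClosed (convexHull ℝ (htSet k w)) := (hfin.isCompact_convexHull (𝕜 := ℝ)).isClosed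
  obtain ⟨f, u, hfu, huv⟩ :=
    geometric_hahn_banach_closed_point (convex_convexHull ℝ _) hclosed hvout
  set h : Fin d → ℝ := fun i => f (fun j => if i = j then 1 else 0) with hhdef
  have hf_eq : ∀ x : Fin d → ℝ, f x = ∑ i, x i * h i := by
    intro x
    conv_lhs => rw [pi_eq_sum_univ x]
    rw [map_sum]
    refine Finset.sum_congr rfl fun i _ => ?_
    rw [map_smul, smul_eq_mul, hhdef]
  set Act : Finset (Finset (Fin d)) :=
    (ksets d k).filter (fun I => M ≤ ∑ i ∈ I, w i ^ 2) with hActdef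
  have hActne : Act.Nonempty := ⟨I₀, Finset.mem_filter.mpr ⟨hI₀mem, hI₀M.ge⟩⟩
  set σ : ℝ := Act.sup' hActne (fun I => ∑ i ∈ I, w i * h i) with hσdef
  have hf_restr : ∀ I : Finset (Fin d), f (restr w I) = ∑ i ∈ I, w i * h i := by
    intro I
    rw [hf_eq]
    rw [← Finset.univ_inter I, ← Finset.sum_ite_mem]
    refine Finset.sum_congr rfl fun i _ => ?_
    by_cases hi : i ∈ I <;> simp [restr, hi]
  have hσu : σ < u := by
    rw [hσdef, Finset.sup'_lt_iff]
    intro I hI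
    rw [Finset.mem_filter] at hI
    have hIc := mem_ksets.mp hI.1
    have hIM : ∑ i ∈ I, w i ^ 2 = M := le_antisymm (hMub I hIc) hI.2
    have hmem : restr w I ∈ htSet k w := by
      rw [hHT]; exact ⟨I, ⟨hIc, hIM⟩, rfl⟩
    have := hfu _ (subset_convexHull ℝ _ hmem)
    rwa [hf_restr] at this
  have hkey : ∑ i, v i * h i ≤ σ := by
    refine le_of_forall_pos_le_add fun ε hε => ?_
    set C : ℝ := ∑ i, h i ^ 2 with hCdef
    have hC0 : 0 ≤ C := Finset.sum_nonneg fun i _ => sq_nonneg _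
    set B : ℝ := (∑ i, |w i * h i|) + |σ| + 1 with hBdef
    have hB1 : 1 ≤ B := by
      have h1 : (0:ℝ) ≤ ∑ i, |w i * h i| := Finset.sum_nonneg fun i _ => abs_nonneg _
      have h2 := abs_nonneg σ
      rw [hBdef]; linarith
    set T' : Finset (Finset (Fin d)) :=
      (ksets d k).filter (fun J => ∑ i ∈ J, w i ^ 2 < M) with hT'def
    set δ : ℝ := if hT : T'.Nonempty then T'.inf' hT (fun J => M - ∑ i ∈ J, w i ^ 2) else 1
      with hδdef
    have hδpos : 0 < δ := by
      rw [hδdef]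
      split
      · rename_i hT
        rw [Finset.lt_inf'_iff]
        intro J hJ
        rw [hT'def, Finset.mem_filter] at hJ
        linarith [hJ.2]
      · norm_num
    have hδle : ∀ J ∈ T', δ ≤ M - ∑ i ∈ J, w i ^ 2 := by
      intro J hJ
      rw [hδdef, dif_pos ⟨J, hJ⟩]
      exact Finset.inf'_le _ hJ
    set t : ℝ := min 1 (min (ε / (C + 1)) (δ / (2 * B + C))) with htdef
    have ht0 : 0 < t := by
      apply lt_min
      · norm_num
      apply lt_min
      · positivity
      · positivity
    have ht1 : t ≤ 1 := min_le_left _ _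
    have htε : t * (C + 1) ≤ ε := by
      have h1 : t ≤ ε / (C + 1) := le_trans (min_le_right _ _) (min_le_left _ _)
      rw [le_div_iff₀ (by linarith)] at h1
      linarith
    have htδ : t * (2 * B + C) ≤ δ := by
      have h1 : t ≤ δ / (2 * B + C) := le_trans (min_le_right _ _) (min_le_right _ _)
      rw [le_div_iff₀ (by linarith)] at h1
      linarith
    have hsub := hv (fun i => w i + t * h i)
    simp only at hsub
    have hwsq : (topk k w) ^ 2 = M :=
      le_antisymm (topk_sq_le hk2 w hMub) (hI₀M ▸ le_topk_sq hk2 w hI₀c)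
    have hlin : ∑ i, v i * ((w i + t * h i) - w i) = t * ∑ i, v i * h i := by
      rw [Finset.mul_sum]
      exact Finset.sum_congr rfl fun i _ => by ring
    have hzsq : (topk k (fun i => w i + t * h i)) ^ 2 ≤ M + 2 * t * σ + t ^ 2 * C := by
      refine topk_sq_le hk2 _ fun J hJc => ?_
      have hexp : ∑ i ∈ J, (w i + t * h i) ^ 2
          = ∑ i ∈ J, w i ^ 2 + 2 * t * (∑ i ∈ J, w i * h i)
            + t ^ 2 * (∑ i ∈ J, h i ^ 2) := by
        rw [Finset.mul_sum, Finset.mul_sum, ← Finset.sum_add_distrib, ← Finset.sum_add_distrib]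
        exact Finset.sum_congr rfl fun i _ => by ring
      have hhJ : ∑ i ∈ J, h i ^ 2 ≤ C :=
        Finset.sum_le_sum_of_subset_of_nonneg (Finset.subset_univ J)
          fun _ _ _ => sq_nonneg _
      have hAJ : ∑ i ∈ J, w i * h i ≤ B - |σ| - 1 := by
        calc ∑ i ∈ J, w i * h i ≤ ∑ i ∈ J, |w i * h i| :=
              Finset.sum_le_sum fun i _ => le_abs_self _
          _ ≤ ∑ i, |w i * h i| :=
              Finset.sum_le_sum_of_subset_of_nonneg (Finset.subset_univ J)
                fun _ _ _ => abs_nonneg _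
          _ = B - |σ| - 1 := by rw [hBdef]; ring
      have htsq : t ^ 2 ≤ t := by nlinarith
      by_cases hJa : M ≤ ∑ i ∈ J, w i ^ 2
      · have hJM : ∑ i ∈ J, w i ^ 2 = M := le_antisymm (hMub J hJc) hJa
        have hJσ : ∑ i ∈ J, w i * h i ≤ σ :=
          Finset.le_sup' (fun I => ∑ i ∈ I, w i * h i)
            (Finset.mem_filter.mpr ⟨mem_ksets.mpr hJc, hJa⟩)
        have e1 : 2 * t * (∑ i ∈ J, w i * h i) ≤ 2 * t * σ :=
          mul_le_mul_of_nonneg_left hJσ (by linarith)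
        have e2 : t ^ 2 * (∑ i ∈ J, h i ^ 2) ≤ t ^ 2 * C :=
          mul_le_mul_of_nonneg_left hhJ (sq_nonneg t)
        rw [hexp, hJM]
        linarith
      · push_neg at hJa
        have hJT : J ∈ T' := Finset.mem_filter.mpr ⟨mem_ksets.mpr hJc, hJa⟩
        have hδJ := hδle J hJT
        have hσlb : -|σ| ≤ σ := neg_abs_le σ
        have e1 : 2 * t * (∑ i ∈ J, w i * h i) ≤ 2 * t * (B - |σ| - 1) :=
          mul_le_mul_of_nonneg_left hAJ (by linarith)
        have e2 : t ^ 2 * (∑ i ∈ J, h i ^ 2) ≤ t * C := by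
          calc t ^ 2 * (∑ i ∈ J, h i ^ 2) ≤ t ^ 2 * C :=
                mul_le_mul_of_nonneg_left hhJ (sq_nonneg t)
            _ ≤ t * C := mul_le_mul_of_nonneg_right htsq hC0
        have e3 : 2 * t * (-|σ|) ≤ 2 * t * σ :=
          mul_le_mul_of_nonneg_left hσlb (by linarith)
        have e4 : (0:ℝ) ≤ t ^ 2 * C := mul_nonneg (sq_nonneg t) hC0
        rw [hexp]
        linarith
    rw [hwsq, hlin] at hsub
    have hfinal : (1/2 : ℝ) * M + t * ∑ i, v i * h i
        ≤ (1/2) * (M + 2 * t * σ + t ^ 2 * C) := le_trans hsub (by linarith)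
    have hmul : t * ∑ i, v i * h i ≤ t * (σ + ε) := by
      have htC : t * C ≤ ε := by linarith
      have h5 : t * (t * C) ≤ t * ε := mul_le_mul_of_nonneg_left htC ht0.le
      nlinarith [hfinal, h5]
    exact le_of_mul_le_mul_left hmul ht0
  rw [hf_eq v] at huv
  linarith

end TopkProof

/-- The subdifferential of the half-squared top-k norm at `w` equals the convex
hull of the set of hard-thresholdings of `w`. -/
theorem subdiff_half_squared_topk {d : ℕ} (k : ℕ) (hk1 : 1 ≤ k) (hk2 : k ≤ d)
    (w : Fin d → ℝ) :
    subdiff (fun u => (1 / 2) * (topk k u) ^ 2) w = convexHull ℝ (htSet k w) := by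
  apply Set.Subset.antisymm
  · exact TopkProof.subdiff_subset_hull hk2 w
  · refine convexHull_min ?_ (TopkProof.subdiff_convex _ w)
    intro z hz
    have hne := TopkProof.ksets_nonempty (d := d) (k := k) hk2
    obtain ⟨I₀, hI₀mem, hI₀⟩ :=
      Finset.exists_mem_eq_sup' hne (fun I => ∑ i ∈ I, w i ^ 2)
    have hMub : ∀ I : Finset (Fin d), I.card = k →
        ∑ i ∈ I, w i ^ 2 ≤ (TopkProof.ksets d k).sup' hne (fun I => ∑ i ∈ I, w i ^ 2) :=
      fun I hI => Finset.le_sup' (fun I => ∑ i ∈ I, w i ^ 2) (TopkProof.mem_ksets.mpr hI)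
    rw [TopkProof.htSet_eq hk2 w hMub (TopkProof.mem_ksets.mp hI₀mem) hI₀.symm] at hz
    obtain ⟨I, ⟨hIc, hIM⟩, rfl⟩ := hz
    refine TopkProof.restr_mem_subdiff hk2 hIc fun J hJ => ?_
    rw [hIM]
    exact hMub J hJ
end
end

section
/- Suppose X ∈ ℝ^{n×d}, w* ∈ ℝ^d is supported on S ⊆ {1,...,d} with Xw* = y, X_S is injective, and max_{ℓ ∉ S} |⟨X_S† x_ℓ, sgn(w*_S)⟩| < 1. Then λ := (X_S†)ᵀ sgn(w*_S) satisfies: Xᵀλ ∈ ∂‖·‖₁(w*) and |⟨x_i, λ⟩| < 1 for every i ∉ S. -/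
open Matrix

/-- If `w*` is supported on `S`, `Xw* = y`, `X_S` is injective, and
`max_{ℓ∉S} |⟨X_S† x_ℓ, sgn(w*_S)⟩| < 1`, then `λ := (X_S†)ᵀ sgn(w*_S)` satisfies
`Xᵀλ ∈ ∂‖·‖₁(w*)` (componentwise: equal to `sgn(w*_i)` where `w*_i ≠ 0`, in
`[-1,1]` where `w*_i = 0`) and `|⟨x_i, λ⟩| < 1` for every `i ∉ S`. -/
theorem l1_source_condition {n d : ℕ}
    (X : Matrix (Fin n) (Fin d) ℝ) (S : Finset (Fin d))
    (w : Fin d → ℝ) (y : Fin n → ℝ)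
    (XS : Matrix (Fin n) S ℝ) (hXS : ∀ i (j : S), XS i j = X i (j : Fin d))
    (Xp : Matrix S (Fin n) ℝ)
    (h1 : XS * Xp * XS = XS) (h2 : Xp * XS * Xp = Xp)
    (h3 : (XS * Xp)ᵀ = XS * Xp) (h4 : (Xp * XS)ᵀ = Xp * XS)
    (hsupp : ∀ i, i ∉ S → w i = 0)
    (hXw : X.mulVec w = y)
    (hinj : Function.Injective XS.mulVec)
    (hirr : ∀ ℓ, ℓ ∉ S →
      |∑ j : S, Xp.mulVec (fun i => X i ℓ) j * Real.sign (w (j : Fin d))| < 1) :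
    (∀ i, w i ≠ 0 →
      Xᵀ.mulVec (Xpᵀ.mulVec fun j : S => Real.sign (w (j : Fin d))) i
        = Real.sign (w i)) ∧
    (∀ i, w i = 0 →
      |Xᵀ.mulVec (Xpᵀ.mulVec fun j : S => Real.sign (w (j : Fin d))) i| ≤ 1) ∧
    (∀ i, i ∉ S →
      |Xᵀ.mulVec (Xpᵀ.mulVec fun j : S => Real.sign (w (j : Fin d))) i| < 1) := by
  -- abbreviation for the sign vector
  set s : S → ℝ := fun j : S => Real.sign (w (j : Fin d)) with hs
  -- key rewriting of the quantity of interest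
  have key : ∀ i : Fin d,
      Xᵀ.mulVec (Xpᵀ.mulVec s) i
        = ∑ j : S, Xp.mulVec (fun k => X k i) j * s j := by
    intro i
    simp only [mulVec, dotProduct, transpose_apply, Finset.mul_sum, Finset.sum_mul]
    rw [Finset.sum_comm]
    exact Finset.sum_congr rfl fun j _ => Finset.sum_congr rfl fun k _ => by ring
  -- Xp * XS = 1
  have hid : Xp * XS = 1 := by
    have hmv : ∀ v : S → ℝ, (Xp * XS).mulVec v = v := by
      intro v
      apply hinj
      rw [mulVec_mulVec, ← Matrix.mul_assoc, h1]
    ext j i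
    have := congrFun (hmv (Pi.single i 1)) j
    simpa [mulVec_single, Matrix.one_apply, Pi.single_apply] using this
  -- value on the support
  have hS : ∀ i : Fin d, ∀ hi : i ∈ S,
      Xᵀ.mulVec (Xpᵀ.mulVec s) i = Real.sign (w i) := by
    intro i hi
    rw [key i]
    have hcol : ∀ j : S, Xp.mulVec (fun k => X k i) j = (Xp * XS) j ⟨i, hi⟩ := by
      intro j
      simp only [mulVec, dotProduct, Matrix.mul_apply]
      congr 1
      ext k
      rw [hXS k ⟨i, hi⟩]
    calc ∑ j : S, Xp.mulVec (fun k => X k i) j * s j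
        = ∑ j : S, (1 : Matrix S S ℝ) j ⟨i, hi⟩ * s j := by
          apply Finset.sum_congr rfl
          intro j _
          rw [hcol j, hid]
      _ = Real.sign (w i) := by
          simp [Matrix.one_apply, s]
  refine ⟨?_, ?_, ?_⟩
  · intro i hwi
    have hi : i ∈ S := by
      by_contra h
      exact hwi (hsupp i h)
    exact hS i hi
  · intro i hwi
    by_cases hi : i ∈ S
    · rw [hS i hi, hwi, Real.sign_zero]
      norm_num
    · have := hirr i hi
      rw [key i]
      exact le_of_lt this
  · intro i hi
    rw [key i]
    exact hirr i hi
end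

section
/- Let w* ∈ ℝ^d be supported on S ⊆ {1,...,d} with |w*_i| = γ > 0 for all i ∈ S, and suppose X_S is injective. Then the condition max_{ℓ ∉ S} |⟨X_S† x_ℓ, w*_S⟩| < min_{j ∈ S} |⟨X_S† x_j, w*_S⟩| holds if and only if max_{ℓ ∉ S} |⟨X_S† x_ℓ, sgn(w*_S)⟩| < 1. -/
open Matrix

/-- If all nonzero entries of `w*` (supported on `S`) have the same absolute
value `γ > 0` and `X_S` is injective, then the k-support-norm recovery condition
`max_{ℓ∉S} |⟨X_S† x_ℓ, w*_S⟩| < min_{j∈S} |⟨X_S† x_j, w*_S⟩|` holds iff the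
ℓ1 irrepresentability condition `max_{ℓ∉S} |⟨X_S† x_ℓ, sgn(w*_S)⟩| < 1` holds. -/
theorem equal_magnitude_conditions_equiv {n d : ℕ}
    (X : Matrix (Fin n) (Fin d) ℝ) (S : Finset (Fin d))
    (w : Fin d → ℝ) (γ : ℝ) (hγ : 0 < γ)
    (hsupp : ∀ i, i ∉ S → w i = 0)
    (habs : ∀ j ∈ S, |w j| = γ)
    (XS : Matrix (Fin n) S ℝ) (hXS : ∀ i (j : S), XS i j = X i (j : Fin d))
    (Xp : Matrix S (Fin n) ℝ)
    (h1 : XS * Xp * XS = XS) (h2 : Xp * XS * Xp = Xp)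
    (h3 : (XS * Xp)ᵀ = XS * Xp) (h4 : (Xp * XS)ᵀ = Xp * XS)
    (hinj : Function.Injective XS.mulVec) :
    (∀ ℓ, ℓ ∉ S → ∀ j ∈ S,
        |∑ r : S, Xp.mulVec (fun i => X i ℓ) r * w (r : Fin d)| <
        |∑ r : S, Xp.mulVec (fun i => X i j) r * w (r : Fin d)|) ↔
    (∀ ℓ, ℓ ∉ S →
        |∑ r : S, Xp.mulVec (fun i => X i ℓ) r * Real.sign (w (r : Fin d))| < 1) := by

  -- `Xp * XS = 1` from `h1` and injectivity of `XS.mulVec`.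
  have hP : Xp * XS = 1 := by
    have hv : ∀ v : S → ℝ, (Xp * XS).mulVec v = v := by
      intro v
      apply hinj
      rw [Matrix.mulVec_mulVec, ← Matrix.mul_assoc, h1]
    ext r s
    have := congrFun (hv (Pi.single s 1)) r
    simpa [Matrix.mulVec, dotProduct, Pi.single_apply, Matrix.one_apply,
      mul_ite, Finset.sum_ite_eq] using this
  -- value on columns of `X` indexed by `S`
  have hsumj : ∀ j (hj : j ∈ S),
      ∑ r : S, Xp.mulVec (fun i => X i j) r * w (r : Fin d) = w j := by
    intro j hj
    have hc : (fun i => X i j) = fun i => XS i ⟨j, hj⟩ := by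
      funext i; rw [hXS]
    rw [hc]
    have hm : Xp.mulVec (fun i => XS i ⟨j, hj⟩) = fun r => (Xp * XS) r ⟨j, hj⟩ := by
      funext r; simp [Matrix.mulVec, Matrix.mul_apply, dotProduct]
    rw [hm, hP]
    simp [Matrix.one_apply]
  have hw : ∀ r : S, w (r : Fin d) = Real.sign (w (r : Fin d)) * γ := by
    intro r
    have ha := habs _ r.2
    rcases lt_trichotomy (w (r : Fin d)) 0 with h | h | h
    · rw [Real.sign_of_neg h]
      rw [abs_of_neg h] at ha
      linarith
    · rw [h, abs_zero] at ha
      linarith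
    · rw [Real.sign_of_pos h]
      rw [abs_of_pos h] at ha
      linarith
  have hsign : ∀ (c : S → ℝ),
      ∑ r : S, c r * w (r : Fin d) = γ * ∑ r : S, c r * Real.sign (w (r : Fin d)) := by
    intro c
    rw [Finset.mul_sum]
    refine Finset.sum_congr rfl fun r _ => ?_
    conv_lhs => rw [hw r]
    ring
  constructor
  · intro H l hl
    by_cases hS : S.Nonempty
    · obtain ⟨j, hj⟩ := hS
      have h := H l hl j hj
      rw [hsumj j hj, hsign] at h
      rw [abs_mul, abs_of_pos hγ, habs j hj] at h
      have h' : γ * |∑ r : S, Xp.mulVec (fun i => X i l) r * Real.sign (w (r : Fin d))|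
          < γ * 1 := by simpa using h
      exact (mul_lt_mul_iff_right₀ hγ).mp h'
    · rw [Finset.not_nonempty_iff_eq_empty] at hS
      have hz : ∑ r : S, Xp.mulVec (fun i => X i l) r * Real.sign (w (r : Fin d)) = 0 :=
        Finset.sum_eq_zero fun r _ => absurd r.2 (by simp [hS])
      rw [hz]; norm_num
  · intro H l hl j hj
    rw [hsumj j hj, hsign, abs_mul, abs_of_pos hγ, habs j hj]
    calc γ * |∑ r : S, Xp.mulVec (fun i => X i l) r * Real.sign (w (r : Fin d))|
        < γ * 1 := by exact (mul_lt_mul_iff_right₀ hγ).mpr (H l hl)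
      _ = γ := mul_one γ
end
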